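/- Let Ψ : [a,∞) → ℝ be C² in a neighborhood of +∞ with liminf_{x→∞} Ψ'(x) > 0, and suppose there exist ε, A > 0 and x₀ such that for x ≥ x₀: −1+ε ≤ Ψ''(x)/Ψ'(x)² ≤ A. Then for all x ≥ x₀: (1/(1+A))·e^{−Ψ(x)}/Ψ'(x) ≤ ∫_x^∞ e^{−Ψ(t)} dt ≤ (1/ε)·e^{−Ψ(x)}/Ψ'(x). -/

import Mathlib

open Real Set Filter MeasureTheory Topology

/-- If `Ψ` is C² on `[x₀,∞)` with `liminf_{x→∞} Ψ'(x) > 0`, `Ψ' > 0` on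
`[x₀,∞)` and `−1+ε ≤ Ψ''/Ψ'² ≤ A` on `[x₀,∞)` (`ε, A > 0`), then for all `x ≥ x₀`:
`(1/(1+A))·e^{−Ψ(x)}/Ψ'(x) ≤ ∫_x^∞ e^{−Ψ(t)} dt ≤ (1/ε)·e^{−Ψ(x)}/Ψ'(x)`. -/
theorem stmt19 (Ψ Ψ' Ψ'' : ℝ → ℝ) (a x₀ ε A : ℝ)
    (hax : a ≤ x₀) (hε : 0 < ε) (hA : 0 < A)
    (hd1 : ∀ x ≥ x₀, HasDerivAt Ψ (Ψ' x) x)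
    (hd2 : ∀ x ≥ x₀, HasDerivAt Ψ' (Ψ'' x) x)
    (hcont : ContinuousOn Ψ'' (Set.Ici x₀))
    (hliminf : 0 < Filter.liminf Ψ' Filter.atTop)
    (hpos : ∀ x ≥ x₀, 0 < Ψ' x)
    (hratio : ∀ x ≥ x₀, -1 + ε ≤ Ψ'' x / (Ψ' x) ^ 2 ∧ Ψ'' x / (Ψ' x) ^ 2 ≤ A) :
    ∀ x ≥ x₀,
      (1 / (1 + A)) * (Real.exp (-Ψ x) / Ψ' x) ≤ (∫ t in Set.Ioi x, Real.exp (-Ψ t)) ∧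
      (∫ t in Set.Ioi x, Real.exp (-Ψ t)) ≤ (1 / ε) * (Real.exp (-Ψ x) / Ψ' x) := by
  set G : ℝ → ℝ := fun t => Real.exp (-Ψ t) / Ψ' t with hGdef
  set f : ℝ → ℝ := fun t => Real.exp (-Ψ t) * (1 + Ψ'' t / Ψ' t ^ 2) with hfdef
  have hΨcont : ContinuousOn Ψ (Ici x₀) := fun t ht =>
    ((hd1 t ht).continuousAt).continuousWithinAt
  have hΨ'cont : ContinuousOn Ψ' (Ici x₀) := fun t ht =>
    ((hd2 t ht).continuousAt).continuousWithinAt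
  have hne : ∀ t ∈ Ici x₀, Ψ' t ≠ 0 := fun t ht => (hpos t ht).ne'
  have hecont : ContinuousOn (fun t => Real.exp (-Ψ t)) (Ici x₀) := hΨcont.neg.rexp
  have hfcont : ContinuousOn f (Ici x₀) :=
    hecont.mul (continuousOn_const.add (hcont.div (hΨ'cont.pow 2)
      (fun t ht => pow_ne_zero 2 (hne t ht))))
  -- derivative of G
  have hG' : ∀ t ≥ x₀, HasDerivAt G (-f t) t := by
    intro t ht
    have h1 : HasDerivAt (fun s => Real.exp (-Ψ s)) (Real.exp (-Ψ t) * (-Ψ' t)) t :=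
      ((hd1 t ht).neg).exp
    have h2 : HasDerivAt (fun s => Real.exp (-Ψ s) / Ψ' s)
        ((Real.exp (-Ψ t) * (-Ψ' t) * Ψ' t - Real.exp (-Ψ t) * Ψ'' t) / Ψ' t ^ 2) t :=
      h1.div (hd2 t ht) (hne t ht)
    convert h2 using 1
    have h3 := hne t ht
    have h4 : Ψ' t ^ 2 * (Ψ' t)⁻¹ ^ 2 = 1 := by
      rw [← mul_pow, mul_inv_cancel₀ h3, one_pow]
    simp only [hfdef]
    field_simp
    ring
  -- growth of Ψ
  have hbdd : Filter.IsBoundedUnder (· ≥ ·) Filter.atTop Ψ' := by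
    refine ⟨0, eventually_map.mpr ?_⟩
    filter_upwards [eventually_ge_atTop x₀] with t ht
    exact (hpos t ht).le
  obtain ⟨c, hc0, hev⟩ : ∃ c : ℝ, 0 < c ∧ ∀ᶠ t in atTop, c < Ψ' t :=
    ⟨Filter.liminf Ψ' Filter.atTop / 2, by positivity,
     Filter.eventually_lt_of_lt_liminf (by linarith [hliminf]) hbdd⟩
  obtain ⟨X₁, hX₁⟩ := (hev.and (eventually_ge_atTop x₀)).exists_forall_of_atTop
  set X : ℝ := max X₁ x₀ with hXdef
  have hXx₀ : x₀ ≤ X := le_max_right _ _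
  have hX' : ∀ t ≥ X, c < Ψ' t ∧ x₀ ≤ t := fun t ht =>
    hX₁ t (le_trans (le_max_left _ _) ht)
  have hgrow : ∀ t ≥ X, Ψ X + c * (t - X) ≤ Ψ t := by
    intro t ht
    have hmono : MonotoneOn (fun s => Ψ s - c * s) (Ici X) := by
      apply monotoneOn_of_deriv_nonneg (convex_Ici X)
      · exact ((hΨcont.mono (Ici_subset_Ici.mpr hXx₀)).sub
          (continuous_const.mul continuous_id).continuousOn)
      · intro s hs
        rw [interior_Ici] at hs
        exact (((hd1 s (le_trans hXx₀ (le_of_lt hs))).sub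
          ((hasDerivAt_id s).const_mul c)).differentiableAt).differentiableWithinAt
      · intro s hs
        rw [interior_Ici] at hs
        have hds : HasDerivAt (fun s => Ψ s - c * s) (Ψ' s - c) s := by
          have := (hd1 s (le_trans hXx₀ (le_of_lt hs))).sub ((hasDerivAt_id s).const_mul c)
          exact this.congr_deriv (by ring)
        rw [hds.deriv]
        linarith [(hX' s (le_of_lt hs)).1]
    have := hmono (self_mem_Ici) (mem_Ici.mpr ht) ht
    simp only at this
    linarith
  -- G tends to 0
  have hG0 : Tendsto G atTop (𝓝 0) := by
    have hub : Tendsto (fun t => Real.exp (-Ψ X + c * X) / c * Real.exp (-(c * t)))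
        atTop (𝓝 0) := by
      have h1 : Tendsto (fun t : ℝ => Real.exp (-(c * t))) atTop (𝓝 0) := by
        have h2 : Tendsto (fun t : ℝ => c * t) atTop atTop :=
          Tendsto.const_mul_atTop hc0 tendsto_id
        exact Real.tendsto_exp_neg_atTop_nhds_zero.comp h2
      simpa using h1.const_mul (Real.exp (-Ψ X + c * X) / c)
    apply tendsto_of_tendsto_of_tendsto_of_le_of_le' tendsto_const_nhds hub
    · filter_upwards [eventually_ge_atTop x₀] with t ht
      exact div_nonneg (Real.exp_pos _).le (hpos t ht).le
    · filter_upwards [eventually_ge_atTop X] with t ht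
      have h1 : G t ≤ Real.exp (-Ψ t) / c :=
        div_le_div_of_nonneg_left (Real.exp_pos _).le hc0 (hX' t ht).1.le
      have h2 : Real.exp (-Ψ t) ≤ Real.exp (-(Ψ X + c * (t - X))) :=
        Real.exp_le_exp.mpr (by linarith [hgrow t ht])
      have h3 : Real.exp (-Ψ X + c * X) * Real.exp (-(c * t)) =
          Real.exp (-(Ψ X + c * (t - X))) := by
        rw [← Real.exp_add]; ring_nf
      calc G t ≤ Real.exp (-Ψ t) / c := h1
        _ ≤ Real.exp (-(Ψ X + c * (t - X))) / c :=
            div_le_div_of_nonneg_right h2 hc0.le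
        _ = Real.exp (-Ψ X + c * X) / c * Real.exp (-(c * t)) := by
            rw [div_mul_eq_mul_div, h3]
  -- main argument
  intro x hx
  have hsub : ∀ y, x ≤ y → Set.uIcc x y ⊆ Ici x₀ := by
    intro y hy
    rw [Set.uIcc_of_le hy]
    exact fun t ht => le_trans hx ht.1
  have key : ∀ y, x ≤ y → (∫ t in x..y, f t) = G x - G y := by
    intro y hy
    have h1 : ∫ t in x..y, -f t = G y - G x := by
      apply intervalIntegral.integral_eq_sub_of_hasDerivAt
      · exact fun t ht => hG' t (hsub y hy ht)
      · exact ((hfcont.mono (hsub y hy)).neg).intervalIntegrable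
    rw [intervalIntegral.integral_neg] at h1
    linarith
  have hbound : ∀ y, x ≤ y → ∀ t ∈ Set.Icc x y,
      ε * Real.exp (-Ψ t) ≤ f t ∧ f t ≤ (1 + A) * Real.exp (-Ψ t) := by
    intro y hy t ht
    have ht₀ : x₀ ≤ t := le_trans hx ht.1
    obtain ⟨hr1, hr2⟩ := hratio t ht₀
    have he := (Real.exp_pos (-Ψ t)).le
    constructor
    · have h5 : ε ≤ 1 + Ψ'' t / Ψ' t ^ 2 := by linarith
      calc ε * Real.exp (-Ψ t) ≤ (1 + Ψ'' t / Ψ' t ^ 2) * Real.exp (-Ψ t) :=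
            mul_le_mul_of_nonneg_right h5 he
        _ = f t := by simp only [hfdef]; ring
    · have h5 : 1 + Ψ'' t / Ψ' t ^ 2 ≤ 1 + A := by linarith
      calc f t = (1 + Ψ'' t / Ψ' t ^ 2) * Real.exp (-Ψ t) := by simp only [hfdef]; ring
        _ ≤ (1 + A) * Real.exp (-Ψ t) := mul_le_mul_of_nonneg_right h5 he
  have hIub : ∀ y, x ≤ y → ε * (∫ t in x..y, Real.exp (-Ψ t)) ≤ G x := by
    intro y hy
    have hint1 : IntervalIntegrable (fun t => ε * Real.exp (-Ψ t)) volume x y :=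
      ((hecont.mono (hsub y hy)).const_smul ε).intervalIntegrable
    have hint2 : IntervalIntegrable f volume x y :=
      (hfcont.mono (hsub y hy)).intervalIntegrable
    have h1 : (∫ t in x..y, ε * Real.exp (-Ψ t)) ≤ ∫ t in x..y, f t :=
      intervalIntegral.integral_mono_on hy hint1 hint2
        (fun t ht => (hbound y hy t ht).1)
    rw [intervalIntegral.integral_const_mul, key y hy] at h1
    have hGy : 0 ≤ G y := div_nonneg (Real.exp_pos _).le (hpos y (le_trans hx hy)).le
    linarith
  have hIlb : ∀ y, x ≤ y → G x ≤ (1 + A) * (∫ t in x..y, Real.exp (-Ψ t)) + G y := by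
    intro y hy
    have hint1 : IntervalIntegrable (fun t => (1 + A) * Real.exp (-Ψ t)) volume x y :=
      ((hecont.mono (hsub y hy)).const_smul (1 + A)).intervalIntegrable
    have hint2 : IntervalIntegrable f volume x y :=
      (hfcont.mono (hsub y hy)).intervalIntegrable
    have h1 : (∫ t in x..y, f t) ≤ ∫ t in x..y, (1 + A) * Real.exp (-Ψ t) :=
      intervalIntegral.integral_mono_on hy hint2 hint1
        (fun t ht => (hbound y hy t ht).2)
    rw [intervalIntegral.integral_const_mul, key y hy] at h1
    linarith
  -- integrability on Ioi x
  have hInt : IntegrableOn (fun t => Real.exp (-Ψ t)) (Ioi x) := by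
    apply MeasureTheory.integrableOn_Ioi_of_intervalIntegral_norm_bounded
      (G x / ε) x (b := fun y : ℝ => y) (l := atTop) ?_ tendsto_id
    · filter_upwards [eventually_ge_atTop x] with y hy
      have heq : (∫ t in x..y, ‖Real.exp (-Ψ t)‖) = ∫ t in x..y, Real.exp (-Ψ t) := by
        apply intervalIntegral.integral_congr
        intro t _
        exact abs_of_pos (Real.exp_pos _)
      rw [heq, le_div_iff₀ hε]
      linarith [hIub y hy]
    · intro i
      rcases le_or_gt x i with h | h
      · exact ((hecont.mono (fun t ht => le_trans hx ht.1)).integrableOn_Icc).mono_set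
          Set.Ioc_subset_Icc_self
      · rw [Set.Ioc_eq_empty (by exact fun h' => absurd h' (not_lt.mpr h.le))]
        exact integrableOn_empty
  have hTend : Tendsto (fun y => ∫ t in x..y, Real.exp (-Ψ t)) atTop
      (𝓝 (∫ t in Set.Ioi x, Real.exp (-Ψ t))) :=
    MeasureTheory.intervalIntegral_tendsto_integral_Ioi x hInt tendsto_id
  set J : ℝ := ∫ t in Set.Ioi x, Real.exp (-Ψ t) with hJdef
  constructor
  · -- lower bound
    have h1 : Tendsto (fun y => (1 + A) * (∫ t in x..y, Real.exp (-Ψ t)) + G y) atTop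
        (𝓝 ((1 + A) * J + 0)) := (hTend.const_mul (1 + A)).add hG0
    have h2 : G x ≤ (1 + A) * J + 0 := by
      refine ge_of_tendsto h1 ?_
      filter_upwards [eventually_ge_atTop x] with y hy
      exact hIlb y hy
    rw [add_zero] at h2
    rw [div_mul_eq_mul_div, one_mul, div_le_iff₀ (by linarith : (0:ℝ) < 1 + A)]
    calc Real.exp (-Ψ x) / Ψ' x = G x := rfl
      _ ≤ (1 + A) * J := h2
      _ = J * (1 + A) := mul_comm _ _
  · -- upper bound
    have h2 : ε * J ≤ G x := by
      refine le_of_tendsto (hTend.const_mul ε) ?_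
      filter_upwards [eventually_ge_atTop x] with y hy
      exact hIub y hy
    rw [div_mul_eq_mul_div, one_mul, le_div_iff₀ hε]
    calc J * ε = ε * J := mul_comm _ _
      _ ≤ G x := h2
      _ = Real.exp (-Ψ x) / Ψ' x := rfl
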